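/- arXiv:2006.04111 — 4 statements merged into one kernel-verified Lean document; each statement's English description precedes it below -/
import Mathlib

section
/- For every real number γ with 0 < γ ≤ 2, the doubly infinite series of the fractional centered difference coefficients sums to zero: the family (ω_k^{(γ)})_{k ∈ ℤ} is summable and Σ_{k=−∞}^{∞} ω_k^{(γ)} = 0. -/
open Real

/-- Fractional centered difference coefficients
`ω_k^{(γ)} = (−1)^k Γ(γ+1) / (Γ(γ/2 − k + 1) Γ(γ/2 + k + 1))`. -/
noncomputable def fracCenteredCoeff (γ : ℝ) (k : ℤ) : ℝ :=
  (-1 : ℝ) ^ k * Real.Gamma (γ + 1) /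
    (Real.Gamma (γ / 2 - k + 1) * Real.Gamma (γ / 2 + k + 1))

open Filter Finset

private lemma negOne_zpow_inv (m : ℤ) : ((-1 : ℝ) ^ m)⁻¹ = (-1 : ℝ) ^ m := by
  rcases Int.even_or_odd m with h | h
  · simp [h.neg_one_zpow]
  · rw [h.neg_one_zpow]; norm_num

private lemma fracCenteredCoeff_neg (γ : ℝ) (m : ℤ) :
    fracCenteredCoeff γ (-m) = fracCenteredCoeff γ m := by
  unfold fracCenteredCoeff
  rw [Int.cast_neg, zpow_neg, negOne_zpow_inv]
  rw [show γ / 2 - -(m : ℝ) + 1 = γ / 2 + m + 1 by ring,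
    show γ / 2 + -(m : ℝ) + 1 = γ / 2 - m + 1 by ring,
    mul_comm (Real.Gamma (γ / 2 + m + 1))]

private lemma aux_alg (X s g p G : ℝ) (hs : s ≠ 0) (hg : g ≠ 0) (hp : p ≠ 0)
    (hG : G ≠ 0) :
    1 * X / (g / 2 * G * (g / 2 * G)) = 2 * (X * s / (g * p)) * (p / s / G / (g / 2 * G)) := by
  field_simp

/-- the ratio sequence `u n = Γ(n+1-γ/2)/Γ(n+1+γ/2)` -/
private noncomputable def uu (γ : ℝ) (n : ℕ) : ℝ :=
  Real.Gamma (n + 1 - γ / 2) / Real.Gamma (n + 1 + γ / 2)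

section gammaLtTwo

variable {γ : ℝ} (hγ0 : 0 < γ) (hγ2 : γ < 2)

include hγ0 hγ2 in
private lemma uu_pos (n : ℕ) : 0 < uu γ n := by
  have h1 : (0:ℝ) < (n:ℝ) + 1 - γ / 2 := by
    have : (0:ℝ) ≤ (n:ℝ) := Nat.cast_nonneg n
    linarith
  have h2 : (0:ℝ) < (n:ℝ) + 1 + γ / 2 := by
    have : (0:ℝ) ≤ (n:ℝ) := Nat.cast_nonneg n
    linarith
  exact div_pos (Real.Gamma_pos_of_pos h1) (Real.Gamma_pos_of_pos h2)

include hγ0 hγ2 in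
private lemma uu_succ (n : ℕ) :
    uu γ (n + 1) = uu γ n * (((n:ℝ) + 1 - γ / 2) / ((n:ℝ) + 1 + γ / 2)) := by
  have h1 : (0:ℝ) < (n:ℝ) + 1 - γ / 2 := by
    have : (0:ℝ) ≤ (n:ℝ) := Nat.cast_nonneg n
    linarith
  have h2 : (0:ℝ) < (n:ℝ) + 1 + γ / 2 := by
    have : (0:ℝ) ≤ (n:ℝ) := Nat.cast_nonneg n
    linarith
  unfold uu
  rw [show ((n + 1 : ℕ) : ℝ) + 1 - γ / 2 = ((n:ℝ) + 1 - γ / 2) + 1 by push_cast; ring,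
    show ((n + 1 : ℕ) : ℝ) + 1 + γ / 2 = ((n:ℝ) + 1 + γ / 2) + 1 by push_cast; ring,
    Real.Gamma_add_one h1.ne', Real.Gamma_add_one h2.ne']
  have hg1 := (Real.Gamma_pos_of_pos h1).ne'
  have hg2 := (Real.Gamma_pos_of_pos h2).ne'
  field_simp

include hγ0 hγ2 in
/-- closed form for the coefficient at `k+1`. -/
private lemma coeff_succ_eq (k : ℕ) :
    fracCenteredCoeff γ ((k : ℤ) + 1) =
      -(Real.Gamma (γ + 1) * Real.sin (π * (γ / 2)) / (γ * π)) * (uu γ k - uu γ (k + 1)) := by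
  have hA0 : 0 < γ / 2 := by linarith
  have hA1 : γ / 2 < 1 := by linarith
  have hπ := Real.pi_pos
  have hsπ : 0 < Real.sin (π * (γ / 2)) := by
    apply Real.sin_pos_of_pos_of_lt_pi
    · positivity
    · exact mul_lt_of_lt_one_right hπ hA1
  -- Gamma values
  have hk1A : (0:ℝ) < (k:ℝ) + 1 - γ / 2 := by
    have : (0:ℝ) ≤ (k:ℝ) := Nat.cast_nonneg k
    linarith
  have hg2 : 0 < Real.Gamma ((k:ℝ) + 1 - γ / 2) := Real.Gamma_pos_of_pos hk1A
  have hg3 : 0 < Real.Gamma ((k:ℝ) + 2 + γ / 2) := by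
    apply Real.Gamma_pos_of_pos
    have : (0:ℝ) ≤ (k:ℝ) := Nat.cast_nonneg k
    linarith
  have hΓ1 : Real.Gamma (γ / 2 - k) ≠ 0 := by
    apply Real.Gamma_ne_zero
    intro m hm
    have hz : ((k - m : ℤ) : ℝ) = γ / 2 := by push_cast; linarith
    have h0 : (0:ℝ) < ((k - m : ℤ) : ℝ) := by rw [hz]; exact hA0
    have h1 : ((k - m : ℤ) : ℝ) < 1 := by rw [hz]; exact hA1
    have h0' : (0:ℤ) < k - m := by exact_mod_cast h0
    have h1' : (k:ℤ) - m < 1 := by exact_mod_cast h1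
    omega
  -- sine computation
  have hsin : Real.sin (π * (γ / 2 - k)) = (-1 : ℝ) ^ k * Real.sin (π * (γ / 2)) := by
    have harg : π * (γ / 2 - (k:ℝ)) = π * (γ / 2) + ((-(k:ℤ) : ℤ) : ℝ) * π := by
      push_cast; ring
    rw [harg, Real.sin_add_int_mul_pi, zpow_neg, negOne_zpow_inv, zpow_natCast]
  -- reflection formula
  have hrefl := Real.Gamma_mul_Gamma_one_sub (γ / 2 - k)
  rw [show (1 : ℝ) - (γ / 2 - k) = (k:ℝ) + 1 - γ / 2 by ring, hsin] at hrefl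
  have hΓval : Real.Gamma (γ / 2 - k) =
      π / ((-1 : ℝ) ^ k * Real.sin (π * (γ / 2))) / Real.Gamma ((k:ℝ) + 1 - γ / 2) := by
    rw [eq_div_iff hg2.ne']
    exact hrefl
  -- difference of the ratio sequence
  have hdiff : uu γ k - uu γ (k + 1) =
      γ * Real.Gamma ((k:ℝ) + 1 - γ / 2) / Real.Gamma ((k:ℝ) + 2 + γ / 2) := by
    rw [uu_succ hγ0 hγ2]
    unfold uu
    have h2 : (0:ℝ) < (k:ℝ) + 1 + γ / 2 := by
      have : (0:ℝ) ≤ (k:ℝ) := Nat.cast_nonneg k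
      linarith
    have hg1 := (Real.Gamma_pos_of_pos h2).ne'
    rw [show (k:ℝ) + 2 + γ / 2 = ((k:ℝ) + 1 + γ / 2) + 1 by ring,
      Real.Gamma_add_one h2.ne']
    field_simp
    ring
  -- unfold and compute
  unfold fracCenteredCoeff
  rw [show ((((k : ℤ) + 1) : ℤ) : ℝ) = (k:ℝ) + 1 by push_cast; ring,
    show γ / 2 - ((k:ℝ) + 1) + 1 = γ / 2 - k by ring,
    show γ / 2 + ((k:ℝ) + 1) + 1 = (k:ℝ) + 2 + γ / 2 by ring,
    show ((-1 : ℝ)) ^ ((k : ℤ) + 1) = (-1 : ℝ) ^ k * (-1) by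
      rw [zpow_add₀ (by norm_num : (-1:ℝ) ≠ 0), zpow_natCast, zpow_one],
    hΓval, hdiff]
  have hs' := hsπ.ne'
  have hπ' := hπ.ne'
  have hγ' := hγ0.ne'
  have hg2' := hg2.ne'
  have hg3' := hg3.ne'
  rcases Nat.even_or_odd k with h | h
  · rw [h.neg_one_pow]
    field_simp [hs', hπ', hγ', hg2', hg3']
  · rw [h.neg_one_pow]
    field_simp [hs', hπ', hγ', hg2', hg3']

include hγ0 hγ2 in
private lemma coeff_zero_eq :
    fracCenteredCoeff γ 0 =
      2 * (Real.Gamma (γ + 1) * Real.sin (π * (γ / 2)) / (γ * π)) * uu γ 0 := by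
  have hA0 : 0 < γ / 2 := by linarith
  have hA1 : γ / 2 < 1 := by linarith
  have hπ := Real.pi_pos
  have hsπ : 0 < Real.sin (π * (γ / 2)) := by
    apply Real.sin_pos_of_pos_of_lt_pi
    · positivity
    · exact mul_lt_of_lt_one_right hπ hA1
  have hΓA : 0 < Real.Gamma (γ / 2) := Real.Gamma_pos_of_pos hA0
  have hΓ1A : 0 < Real.Gamma (1 - γ / 2) := Real.Gamma_pos_of_pos (by linarith)
  have hΓA1 : 0 < Real.Gamma (γ / 2 + 1) := Real.Gamma_pos_of_pos (by linarith)
  have hrefl := Real.Gamma_mul_Gamma_one_sub (γ / 2)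
  have hadd : Real.Gamma (γ / 2 + 1) = (γ / 2) * Real.Gamma (γ / 2) :=
    Real.Gamma_add_one hA0.ne'
  unfold fracCenteredCoeff uu
  rw [show ((0 : ℤ) : ℝ) = 0 by norm_num,
    show ((0 : ℕ) : ℝ) + 1 - γ / 2 = 1 - γ / 2 by norm_num,
    show ((0 : ℕ) : ℝ) + 1 + γ / 2 = γ / 2 + 1 by ring,
    show γ / 2 - 0 + 1 = γ / 2 + 1 by ring, show γ / 2 + 0 + 1 = γ / 2 + 1 by ring,
    zpow_zero]
  -- from reflection : Γ(1-A) = π / (sin(πA) Γ(A))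
  have h1A : Real.Gamma (1 - γ / 2) = π / Real.sin (π * (γ / 2)) / Real.Gamma (γ / 2) := by
    rw [eq_div_iff hΓA.ne', mul_comm]
    exact hrefl
  rw [h1A, hadd]
  exact aux_alg _ _ _ _ _ hsπ.ne' hγ0.ne' hπ.ne' hΓA.ne'

include hγ0 hγ2 in
private lemma uu_le (n : ℕ) :
    uu γ n ≤ uu γ 0 * Real.exp (-(γ / 2) * ∑ i ∈ range n, (1 / ((i : ℝ) + 1))) := by
  induction n with
  | zero => simp
  | succ n ih =>
    have h1 : (0:ℝ) < (n:ℝ) + 1 - γ / 2 := by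
      have : (0:ℝ) ≤ (n:ℝ) := Nat.cast_nonneg n
      linarith
    have h2 : (0:ℝ) < (n:ℝ) + 1 + γ / 2 := by
      have : (0:ℝ) ≤ (n:ℝ) := Nat.cast_nonneg n
      linarith
    have hn1 : (0:ℝ) < (n:ℝ) + 1 := by positivity
    have hfac : ((n:ℝ) + 1 - γ / 2) / ((n:ℝ) + 1 + γ / 2) ≤
        Real.exp (-(γ / 2) * (1 / ((n:ℝ) + 1))) := by
      have hle : ((n:ℝ) + 1 - γ / 2) / ((n:ℝ) + 1 + γ / 2) ≤
          1 - (γ / 2) * (1 / ((n:ℝ) + 1)) := by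
        rw [div_le_iff₀ h2]
        have he : (1 - γ / 2 * (1 / ((n:ℝ) + 1))) * ((n:ℝ) + 1 + γ / 2) =
            (n:ℝ) + 1 - (γ / 2) * (γ / 2) / ((n:ℝ) + 1) := by
          field_simp
          ring
        rw [he]
        have hq : (γ / 2) * (γ / 2) / ((n:ℝ) + 1) ≤ γ / 2 := by
          rw [div_le_iff₀ hn1]
          nlinarith
        linarith
      have := Real.add_one_le_exp (-(γ / 2) * (1 / ((n:ℝ) + 1)))
      linarith
    rw [uu_succ hγ0 hγ2, sum_range_succ, mul_add, Real.exp_add, ← mul_assoc]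
    have huupos := (uu_pos (γ := γ) hγ0 hγ2 n).le
    have hupos0 := (uu_pos (γ := γ) hγ0 hγ2 0).le
    calc uu γ n * (((n:ℝ) + 1 - γ / 2) / ((n:ℝ) + 1 + γ / 2))
        ≤ (uu γ 0 * Real.exp (-(γ / 2) * ∑ i ∈ range n, (1 / ((i : ℝ) + 1)))) *
            Real.exp (-(γ / 2) * (1 / ((n:ℝ) + 1))) := by
          exact mul_le_mul ih hfac (div_nonneg h1.le h2.le)
            (mul_nonneg (uu_pos hγ0 hγ2 0).le (Real.exp_nonneg _))
      _ = uu γ 0 * Real.exp (-(γ / 2) * ∑ i ∈ range n, (1 / ((i : ℝ) + 1))) *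
            Real.exp (-(γ / 2) * (1 / ((n:ℝ) + 1))) := rfl

include hγ0 hγ2 in
private lemma uu_tendsto : Tendsto (fun n => uu γ n) atTop (nhds 0) := by
  have hH : Tendsto (fun n => ∑ i ∈ range n, (1 / ((i : ℝ) + 1))) atTop atTop := by
    exact_mod_cast Real.tendsto_sum_range_one_div_nat_succ_atTop
  have hneg : Tendsto (fun n => -(γ / 2) * ∑ i ∈ range n, (1 / ((i : ℝ) + 1))) atTop atBot :=
    (tendsto_const_mul_atBot_of_neg (by linarith)).mpr hH
  have hexp : Tendsto (fun n =>
      uu γ 0 * Real.exp (-(γ / 2) * ∑ i ∈ range n, (1 / ((i : ℝ) + 1)))) atTop (nhds 0) := by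
    have := (Real.tendsto_exp_atBot.comp hneg).const_mul (uu γ 0)
    simpa using this
  exact squeeze_zero (fun n => (uu_pos (γ := γ) hγ0 hγ2 n).le)
    (fun n => uu_le hγ0 hγ2 n) hexp

end gammaLtTwo

theorem stmt_1 (γ : ℝ) (hγ0 : 0 < γ) (hγ2 : γ ≤ 2) :
    Summable (fun k : ℤ => fracCenteredCoeff γ k) ∧
    ∑' k : ℤ, fracCenteredCoeff γ k = 0 := by
  rcases eq_or_lt_of_le hγ2 with hγeq | hγlt
  · -- case γ = 2 : finitely supported
    subst hγeq
    have hzero : ∀ k : ℤ, k ∉ ({-1, 0, 1} : Finset ℤ) → fracCenteredCoeff 2 k = 0 := by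
      intro k hk
      simp only [Finset.mem_insert, Finset.mem_singleton] at hk
      push_neg at hk
      unfold fracCenteredCoeff
      rcases le_or_gt 2 k with h | h
      · have h2k : (((k - 2).toNat : ℤ) : ℝ) = (k : ℝ) - 2 := by
          have : ((k - 2).toNat : ℤ) = k - 2 := Int.toNat_of_nonneg (by omega)
          rw [this]; push_cast; ring
        have harg : (2:ℝ) / 2 - k + 1 = -(((k - 2).toNat : ℕ) : ℝ) := by
          rw [show ((((k - 2).toNat : ℕ)) : ℝ) = (((k - 2).toNat : ℤ) : ℝ) by push_cast; ring,
            h2k]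
          ring
        rw [harg, Real.Gamma_neg_nat_eq_zero, zero_mul, div_zero]
      · have hk2 : k ≤ -2 := by omega
        have h2k : ((((-k) - 2).toNat : ℤ) : ℝ) = -(k : ℝ) - 2 := by
          have : (((-k) - 2).toNat : ℤ) = -k - 2 := Int.toNat_of_nonneg (by omega)
          rw [this]; push_cast; ring
        have harg : (2:ℝ) / 2 + k + 1 = -((((-k) - 2).toNat : ℕ) : ℝ) := by
          rw [show (((((-k) - 2).toNat : ℕ)) : ℝ) = ((((-k) - 2).toNat : ℤ) : ℝ) by
            push_cast; ring, h2k]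
          ring
        rw [harg, Real.Gamma_neg_nat_eq_zero, mul_zero, div_zero]
    have hΓ3 : Real.Gamma (3) = 2 := by
      rw [show (3:ℝ) = ((2:ℕ):ℝ) + 1 by norm_num, Real.Gamma_nat_eq_factorial]
      norm_num
    have hΓ2 : Real.Gamma (2) = 1 := by
      rw [show (2:ℝ) = ((1:ℕ):ℝ) + 1 by norm_num, Real.Gamma_nat_eq_factorial]
      norm_num
    have hsum : HasSum (fun k : ℤ => fracCenteredCoeff 2 k)
        (∑ k ∈ ({-1, 0, 1} : Finset ℤ), fracCenteredCoeff 2 k) :=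
      hasSum_sum_of_ne_finset_zero hzero
    have hm1 : fracCenteredCoeff 2 (-1) = -1 := by
      unfold fracCenteredCoeff
      rw [show (((-1:ℤ)):ℝ) = -1 by norm_num,
        show (2:ℝ)/2 - (-1) + 1 = 3 by norm_num,
        show (2:ℝ)/2 + (-1) + 1 = 1 by norm_num,
        show (2:ℝ) + 1 = 3 by norm_num,
        Real.Gamma_one, hΓ3,
        show ((-1:ℝ) ^ (-1:ℤ)) = -1 by rw [zpow_neg_one]; norm_num]
      norm_num
    have h00 : fracCenteredCoeff 2 0 = 2 := by
      unfold fracCenteredCoeff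
      rw [show (((0:ℤ)):ℝ) = 0 by norm_num,
        show (2:ℝ)/2 - 0 + 1 = 2 by norm_num,
        show (2:ℝ)/2 + 0 + 1 = 2 by norm_num,
        show (2:ℝ) + 1 = 3 by norm_num,
        hΓ2, hΓ3, zpow_zero]
      norm_num
    have h11 : fracCenteredCoeff 2 1 = -1 := by
      unfold fracCenteredCoeff
      rw [show (((1:ℤ)):ℝ) = 1 by norm_num,
        show (2:ℝ)/2 - 1 + 1 = 1 by norm_num,
        show (2:ℝ)/2 + 1 + 1 = 3 by norm_num,
        show (2:ℝ) + 1 = 3 by norm_num,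
        Real.Gamma_one, hΓ3, zpow_one]
      norm_num
    have hval : (∑ k ∈ ({-1, 0, 1} : Finset ℤ), fracCenteredCoeff 2 k) = 0 := by
      rw [Finset.sum_insert (by decide), Finset.sum_insert (by decide),
        Finset.sum_singleton, hm1, h00, h11]
      norm_num
    rw [hval] at hsum
    exact ⟨hsum.summable, hsum.tsum_eq⟩
  · -- case γ < 2
    set D : ℝ := Real.Gamma (γ + 1) * Real.sin (π * (γ / 2)) / (γ * π) with hD
    have hA0 : 0 < γ / 2 := by linarith
    have hA1 : γ / 2 < 1 := by linarith
    have hπ := Real.pi_pos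
    have hsπ : 0 < Real.sin (π * (γ / 2)) := by
      apply Real.sin_pos_of_pos_of_lt_pi
      · positivity
      · exact mul_lt_of_lt_one_right hπ hA1
    have hΓγ : 0 < Real.Gamma (γ + 1) := Real.Gamma_pos_of_pos (by linarith)
    have hDpos : 0 < D := by
      rw [hD]; positivity
    have hudec : ∀ n : ℕ, uu γ (n + 1) ≤ uu γ n := by
      intro n
      rw [uu_succ hγ0 hγlt]
      have h2 : (0:ℝ) < (n:ℝ) + 1 + γ / 2 := by
        have : (0:ℝ) ≤ (n:ℝ) := Nat.cast_nonneg n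
        linarith
      have hfle : ((n:ℝ) + 1 - γ / 2) / ((n:ℝ) + 1 + γ / 2) ≤ 1 := by
        rw [div_le_one h2]; linarith
      have := (uu_pos (γ := γ) hγ0 hγlt n).le
      nlinarith
    -- partial sums of the shifted sequence
    have hpartial : ∀ n : ℕ,
        ∑ i ∈ range n, fracCenteredCoeff γ ((i : ℤ) + 1) = -D * (uu γ 0 - uu γ n) := by
      intro n
      have : ∀ i ∈ range n, fracCenteredCoeff γ ((i : ℤ) + 1) =
          -D * (uu γ i - uu γ (i + 1)) := fun i _ => coeff_succ_eq hγ0 hγlt i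
      rw [Finset.sum_congr rfl this, ← Finset.mul_sum, Finset.sum_range_sub']
    -- summability of the shifted sequence
    have hgsummable : Summable (fun n : ℕ => fracCenteredCoeff γ ((n : ℤ) + 1)) := by
      have hneg : Summable (fun n : ℕ => -fracCenteredCoeff γ ((n : ℤ) + 1)) := by
        apply summable_of_sum_range_le (c := D * uu γ 0)
        · intro n
          rw [coeff_succ_eq hγ0 hγlt n]
          have := hudec n
          nlinarith
        · intro n
          rw [Finset.sum_neg_distrib, hpartial n]
          have := (uu_pos (γ := γ) hγ0 hγlt n).le
          nlinarith
      simpa using hneg.neg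
    -- the shifted sum has value -D * uu γ 0
    have hgsum : HasSum (fun n : ℕ => fracCenteredCoeff γ ((n : ℤ) + 1)) (-D * uu γ 0) := by
      have h1 := hgsummable.hasSum.tendsto_sum_nat
      have h2 : Tendsto (fun n : ℕ => ∑ i ∈ range n, fracCenteredCoeff γ ((i : ℤ) + 1))
          atTop (nhds (-D * uu γ 0)) := by
        have hu0 := uu_tendsto hγ0 hγlt
        have : Tendsto (fun n : ℕ => -D * (uu γ 0 - uu γ n)) atTop (nhds (-D * (uu γ 0 - 0))) :=
          (tendsto_const_nhds.sub hu0).const_mul (-D)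
        simp only [sub_zero] at this
        exact Tendsto.congr (fun n => (hpartial n).symm) this
      have := tendsto_nhds_unique h1 h2
      rw [← this]
      exact hgsummable.hasSum
    -- assemble over ℤ
    have hnat : HasSum (fun n : ℕ => fracCenteredCoeff γ (n : ℤ))
        (-D * uu γ 0 + fracCenteredCoeff γ 0) := by
      have hshift : HasSum
          (fun n : ℕ => (fun m : ℕ => fracCenteredCoeff γ (m : ℤ)) (n + 1))
          (-D * uu γ 0) := by
        have heq : (fun n : ℕ => (fun m : ℕ => fracCenteredCoeff γ (m : ℤ)) (n + 1)) =
            fun n : ℕ => fracCenteredCoeff γ ((n : ℤ) + 1) := by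
          funext n
          norm_num
        rw [heq]
        exact hgsum
      have := (hasSum_nat_add_iff (f := fun n : ℕ => fracCenteredCoeff γ (n : ℤ)) 1).mp hshift
      simpa using this
    have hneg : HasSum (fun n : ℕ => fracCenteredCoeff γ (-((n : ℤ) + 1))) (-D * uu γ 0) := by
      have : (fun n : ℕ => fracCenteredCoeff γ (-((n : ℤ) + 1))) =
          fun n : ℕ => fracCenteredCoeff γ ((n : ℤ) + 1) := by
        funext n
        exact fracCenteredCoeff_neg γ ((n : ℤ) + 1)
      rw [this]
      exact hgsum
    have htotal : HasSum (fun k : ℤ => fracCenteredCoeff γ k)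
        ((-D * uu γ 0 + fracCenteredCoeff γ 0) + -D * uu γ 0) :=
      hnat.of_nat_of_neg_add_one hneg
    have hzero : (-D * uu γ 0 + fracCenteredCoeff γ 0) + -D * uu γ 0 = 0 := by
      rw [coeff_zero_eq hγ0 hγlt]
      ring
    rw [hzero] at htotal
    exact ⟨htotal.summable, htotal.tsum_eq⟩
end

section
/- Let n ≥ 1 and let a, b, c be real numbers with a·c > 0. Let A be the n×n real tridiagonal Toeplitz matrix with b on the main diagonal, a on the superdiagonal, and c on the subdiagonal (all other entries zero). Then for each j ∈ {1, 2, ..., n}, the nonzero vector x_j ∈ ℝ^n whose i-th entry is (c/a)^{i/2} sin(i j π/(n+1)) (i = 1, ..., n) satisfies A x_j = λ_j x_j, where λ_j = b + 2a √(c/a) cos(j π/(n+1)). -/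
open Real Matrix

theorem fin_sum_ite_nat {n : ℕ} (m : ℕ) (G : Fin n → ℝ) :
    ∑ k : Fin n, (if (k : ℕ) = m then G k else 0)
      = if h : m < n then G ⟨m, h⟩ else 0 := by
  split
  · rename_i h
    rw [Finset.sum_eq_single (⟨m, h⟩ : Fin n)]
    · simp
    · intro k _ hk
      rw [if_neg]
      simpa [Fin.ext_iff] using hk
    · simp
  · rename_i h
    apply Finset.sum_eq_zero
    intro k _
    rw [if_neg]
    intro hkm
    exact h (hkm ▸ k.isLt)

theorem stmt_4 (n : ℕ) (hn : 1 ≤ n) (a b c : ℝ) (hac : 0 < a * c)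
    (A : Matrix (Fin n) (Fin n) ℝ)
    (hA : ∀ i j : Fin n, A i j =
      if i = j then b
      else if (j : ℕ) = (i : ℕ) + 1 then a
      else if (i : ℕ) = (j : ℕ) + 1 then c
      else 0)
    (j : Fin n) :
    (fun i : Fin n =>
        (c / a) ^ ((((i : ℕ) : ℝ) + 1) / 2) *
          Real.sin ((((i : ℕ) : ℝ) + 1) * (((j : ℕ) : ℝ) + 1) * Real.pi / ((n : ℝ) + 1)))
      ≠ 0 ∧
    A.mulVec (fun i : Fin n =>
        (c / a) ^ ((((i : ℕ) : ℝ) + 1) / 2) *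
          Real.sin ((((i : ℕ) : ℝ) + 1) * (((j : ℕ) : ℝ) + 1) * Real.pi / ((n : ℝ) + 1)))
      = (b + 2 * a * Real.sqrt (c / a) * Real.cos ((((j : ℕ) : ℝ) + 1) * Real.pi / ((n : ℝ) + 1))) •
        (fun i : Fin n =>
        (c / a) ^ ((((i : ℕ) : ℝ) + 1) / 2) *
          Real.sin ((((i : ℕ) : ℝ) + 1) * (((j : ℕ) : ℝ) + 1) * Real.pi / ((n : ℝ) + 1))) := by
  have ha : a ≠ 0 := by
    intro h; rw [h, zero_mul] at hac; exact lt_irrefl 0 hac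
  have hr : 0 < c / a := by
    have h1 : c / a = (a * c) / (a * a) := by field_simp
    rw [h1]
    exact div_pos hac (mul_self_pos.mpr ha)
  set r : ℝ := c / a with hrdef
  have hc : c = a * r := by rw [hrdef]; field_simp
  set θ : ℝ := (((j : ℕ) : ℝ) + 1) * Real.pi / ((n : ℝ) + 1) with hθ
  set f : ℕ → ℝ := fun m => r ^ (((m : ℕ) : ℝ) / 2) * Real.sin (((m : ℕ) : ℝ) * θ) with hf
  have hx : (fun i : Fin n =>
        r ^ ((((i : ℕ) : ℝ) + 1) / 2) *
          Real.sin ((((i : ℕ) : ℝ) + 1) * (((j : ℕ) : ℝ) + 1) * Real.pi / ((n : ℝ) + 1)))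
      = fun i : Fin n => f ((i : ℕ) + 1) := by
    funext i
    have harg : ((((i : ℕ) + 1 : ℕ)) : ℝ) * θ
        = (((i : ℕ) : ℝ) + 1) * (((j : ℕ) : ℝ) + 1) * Real.pi / ((n : ℝ) + 1) := by
      rw [hθ]; push_cast; ring
    simp only [hf, harg]
    push_cast
    ring_nf
  rw [hx]
  have hθ1 : 0 < θ := by
    rw [hθ]
    have := Real.pi_pos
    positivity
  have hθ2 : θ < Real.pi := by
    rw [hθ, div_lt_iff₀ (by positivity)]
    have hj : ((j : ℕ) : ℝ) < (n : ℝ) := by exact_mod_cast j.isLt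
    nlinarith [Real.pi_pos]
  have hf0 : f 0 = 0 := by simp [hf]
  have hfn : f (n + 1) = 0 := by
    have harg : (((n + 1 : ℕ)) : ℝ) * θ = (((j : ℕ) + 1 : ℕ) : ℝ) * Real.pi := by
      rw [hθ]; push_cast
      have hn1 : ((n : ℝ) + 1) ≠ 0 := by positivity
      field_simp
    simp only [hf, harg, Real.sin_nat_mul_pi, mul_zero]
  have hrec : ∀ m : ℕ, a * f (m + 2) + c * f m
      = (2 * a * Real.sqrt r * Real.cos θ) * f (m + 1) := by
    intro m
    have hsq : Real.sqrt r = r ^ ((1 : ℝ) / 2) := Real.sqrt_eq_rpow r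
    have h2 : r ^ ((((m + 2 : ℕ)) : ℝ) / 2) = r ^ (((m : ℕ) : ℝ) / 2) * r := by
      rw [show (((m + 2 : ℕ)) : ℝ) / 2 = ((m : ℕ) : ℝ) / 2 + 1 by push_cast; ring,
        Real.rpow_add hr, Real.rpow_one]
    have h1 : r ^ ((((m + 1 : ℕ)) : ℝ) / 2)
        = r ^ (((m : ℕ) : ℝ) / 2) * r ^ ((1 : ℝ) / 2) := by
      rw [show (((m + 1 : ℕ)) : ℝ) / 2 = ((m : ℕ) : ℝ) / 2 + 1 / 2 by push_cast; ring,
        Real.rpow_add hr]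
    have hhalf : r ^ ((1 : ℝ) / 2) * r ^ ((1 : ℝ) / 2) = r := by
      rw [← Real.rpow_add hr]; norm_num
    have hsin : Real.sin ((((m + 2 : ℕ)) : ℝ) * θ) + Real.sin (((m : ℕ) : ℝ) * θ)
        = 2 * Real.sin ((((m + 1 : ℕ)) : ℝ) * θ) * Real.cos θ := by
      have e2 : (((m + 2 : ℕ)) : ℝ) * θ = (((m + 1 : ℕ)) : ℝ) * θ + θ := by push_cast; ring
      have e0 : ((m : ℕ) : ℝ) * θ = (((m + 1 : ℕ)) : ℝ) * θ - θ := by push_cast; ring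
      rw [e2, e0, Real.sin_add, Real.sin_sub]; ring
    simp only [hf]
    rw [hc, h2, h1, hsq]
    linear_combination (a * r ^ (((m : ℕ) : ℝ) / 2) * r) * hsin
      - (2 * a * Real.cos θ * r ^ (((m : ℕ) : ℝ) / 2)
          * Real.sin ((((m + 1 : ℕ)) : ℝ) * θ)) * hhalf
  constructor
  · intro h0
    have h1 := congrFun h0 ⟨0, by omega⟩
    have hpos : 0 < f (((⟨0, by omega⟩ : Fin n) : ℕ) + 1) := by
      simp only [hf]
      push_cast
      rw [one_mul]
      exact mul_pos (Real.rpow_pos_of_pos hr _) (Real.sin_pos_of_pos_of_lt_pi hθ1 hθ2)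
    rw [h1] at hpos
    exact lt_irrefl 0 hpos
  · funext i
    simp only [Matrix.mulVec, dotProduct, Pi.smul_apply, smul_eq_mul]
    have hterm : ∀ k : Fin n, A i k * f ((k : ℕ) + 1)
        = (if k = i then b * f ((i : ℕ) + 1) else 0)
          + (if (k : ℕ) = (i : ℕ) + 1 then a * f ((k : ℕ) + 1) else 0)
          + (if (i : ℕ) = (k : ℕ) + 1 then c * f ((k : ℕ) + 1) else 0) := by
      intro k
      rw [hA]
      rcases eq_or_ne i k with h | h
      · subst h
        simp
      · rw [if_neg h, if_neg (Ne.symm h)]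
        rcases eq_or_ne ((k : ℕ)) ((i : ℕ) + 1) with h2 | h2
        · rw [if_pos h2, if_pos h2, if_neg (by omega)]
          ring
        · rw [if_neg h2, if_neg h2]
          rcases eq_or_ne ((i : ℕ)) ((k : ℕ) + 1) with h3 | h3
          · rw [if_pos h3, if_pos h3]
            ring
          · rw [if_neg h3, if_neg h3]
            ring
    rw [Finset.sum_congr rfl (fun k _ => hterm k), Finset.sum_add_distrib,
      Finset.sum_add_distrib]
    have hsum1 : ∑ k : Fin n, (if k = i then b * f ((i : ℕ) + 1) else 0)
        = b * f ((i : ℕ) + 1) := by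
      rw [Finset.sum_ite_eq' Finset.univ i (fun _ => b * f ((i : ℕ) + 1))]
      simp
    have hsum2 : ∑ k : Fin n, (if (k : ℕ) = (i : ℕ) + 1 then a * f ((k : ℕ) + 1) else 0)
        = a * f ((i : ℕ) + 2) := by
      rw [fin_sum_ite_nat ((i : ℕ) + 1) (fun k => a * f ((k : ℕ) + 1))]
      split
      · rename_i h
        norm_num
      · rename_i h
        have hin : (i : ℕ) + 1 = n := by have := i.isLt; omega
        rw [show (i : ℕ) + 2 = n + 1 by omega, hfn, mul_zero]
    have hsum3 : ∑ k : Fin n, (if (i : ℕ) = (k : ℕ) + 1 then c * f ((k : ℕ) + 1) else 0)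
        = c * f (i : ℕ) := by
      rcases Nat.eq_zero_or_pos (i : ℕ) with hi | hi
      · rw [hi, hf0, mul_zero]
        apply Finset.sum_eq_zero
        intro k _
        simp
      · obtain ⟨m, hm⟩ : ∃ m, (i : ℕ) = m + 1 := ⟨(i : ℕ) - 1, by omega⟩
        have hcond : ∀ k : Fin n, (if (i : ℕ) = (k : ℕ) + 1 then c * f ((k : ℕ) + 1) else 0)
            = (if (k : ℕ) = m then c * f ((k : ℕ) + 1) else 0) := by
          intro k
          rcases eq_or_ne ((k : ℕ)) m with h | h
          · rw [if_pos h, if_pos (by omega)]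
          · rw [if_neg h, if_neg (by omega)]
        rw [Finset.sum_congr rfl (fun k _ => hcond k),
          fin_sum_ite_nat m (fun k => c * f ((k : ℕ) + 1))]
        have hmn : m < n := by have := i.isLt; omega
        rw [dif_pos hmn]
        simp only [hm]
    rw [hsum1, hsum2, hsum3]
    linear_combination hrec (i : ℕ)
end

section
/- For every real number γ with 0 < γ ≤ 2 and every integer m ≥ 1, the m×m real symmetric Toeplitz matrix B_x^{γ} with entries (B_x^{γ})_{i,j} = ω_{|i−j|}^{(γ)} for i, j = 1, ..., m is positive definite. -/
open Real Matrix Finset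

private lemma inv_Gamma_succ (s : ℝ) : (Real.Gamma s)⁻¹ = s * (Real.Gamma (s+1))⁻¹ := by
  rcases eq_or_ne s 0 with h | h
  · simp [h, Real.Gamma_zero]
  · rw [Real.Gamma_add_one h]
    rcases eq_or_ne (Real.Gamma s) 0 with hg | hg
    · simp [hg]
    · field_simp

private lemma coeff_rec (γ : ℝ) (hγ0 : 0 < γ) (k : ℕ) :
    (γ/2 + k + 1) * fracCenteredCoeff γ (k+1) = ((k:ℝ) - γ/2) * fracCenteredCoeff γ k := by
  unfold fracCenteredCoeff
  have hpow : ((-1:ℝ)) ^ ((k:ℤ)+1) = -(-1:ℝ)^(k:ℤ) := by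
    rw [zpow_add_one₀ (by norm_num : (-1:ℝ) ≠ 0)]; ring
  push_cast
  set d := γ/2 with hd
  have ht : (0:ℝ) < d + k + 1 := by rw [hd]; positivity
  have hGt : Real.Gamma (d + ((k:ℝ)+1) + 1) = (d + k + 1) * Real.Gamma (d + k + 1) := by
    have h1 : d + ((k:ℝ)+1) + 1 = (d + k + 1) + 1 := by ring
    rw [h1, Real.Gamma_add_one (ne_of_gt ht)]
  have hGs : (Real.Gamma (d - ((k:ℝ)+1) + 1))⁻¹
      = (d - ((k:ℝ)+1) + 1) * (Real.Gamma (d - (k:ℝ) + 1))⁻¹ := by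
    have h2 : d - ((k:ℝ)+1) + 1 + 1 = d - (k:ℝ) + 1 := by ring
    rw [inv_Gamma_succ (d - ((k:ℝ)+1) + 1), h2]
  have htne : (d + (k:ℝ) + 1) ≠ 0 := ne_of_gt ht
  have hc : (d + (k:ℝ) + 1) * (d + (k:ℝ) + 1)⁻¹ = 1 := mul_inv_cancel₀ htne
  rw [hpow, hGt, div_eq_mul_inv, div_eq_mul_inv, mul_inv, mul_inv, mul_inv, hGs]
  linear_combination ((k:ℝ) - d) * ((-1:ℝ)^(k:ℤ) * Real.Gamma (γ+1)) *
    (Real.Gamma (d - (k:ℝ) + 1))⁻¹ * (Real.Gamma (d + (k:ℝ) + 1))⁻¹ * hc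

private lemma coeff_zero_pos (γ : ℝ) (hγ0 : 0 < γ) : 0 < fracCenteredCoeff γ 0 := by
  unfold fracCenteredCoeff
  simp only [zpow_zero, one_mul, Int.cast_zero, sub_zero, add_zero]
  have h1 : 0 < Real.Gamma (γ + 1) := Real.Gamma_pos_of_pos (by linarith)
  have h2 : 0 < Real.Gamma (γ/2 + 1) := Real.Gamma_pos_of_pos (by linarith)
  positivity

private lemma coeff_nonpos (γ : ℝ) (hγ0 : 0 < γ) (hγ2 : γ ≤ 2) :
    ∀ k : ℕ, 1 ≤ k → fracCenteredCoeff γ (k:ℤ) ≤ 0 := by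
  intro k hk
  induction k, hk using Nat.le_induction with
  | base =>
    have h := coeff_rec γ hγ0 0
    have h0 := coeff_zero_pos γ hγ0
    push_cast at h ⊢
    nlinarith [h0]
  | succ n hn ih =>
    have h := coeff_rec γ hγ0 n
    have hpos : (0:ℝ) < γ/2 + n + 1 := by positivity
    have hfac : (0:ℝ) ≤ (n:ℝ) - γ/2 := by
      have : (1:ℝ) ≤ (n:ℝ) := by exact_mod_cast hn
      linarith
    push_cast at h ⊢
    nlinarith [mul_nonneg hfac (neg_nonneg.mpr ih)]

private lemma coeff_one_neg (γ : ℝ) (hγ0 : 0 < γ) : fracCenteredCoeff γ 1 < 0 := by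
  have h := coeff_rec γ hγ0 0
  have h0 := coeff_zero_pos γ hγ0
  push_cast at h
  nlinarith [h0]

private lemma coeff_sum_bound (γ : ℝ) (hγ0 : 0 < γ) (hγ2 : γ ≤ 2) (N : ℕ) :
    ∑ k ∈ range N, (-(fracCenteredCoeff γ ((k:ℤ)+1))) ≤ fracCenteredCoeff γ 0 / 2 := by
  have key : ∀ N : ℕ, γ * ∑ k ∈ range N, (-(fracCenteredCoeff γ ((k:ℤ)+1)))
      = (γ/2) * fracCenteredCoeff γ 0
        - ((N:ℝ) + 1 + γ/2) * (-(fracCenteredCoeff γ ((N:ℤ)+1))) := by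
    intro N
    induction N with
    | zero =>
      have h := coeff_rec γ hγ0 0
      push_cast at h ⊢
      simp only [Finset.range_zero, Finset.sum_empty, mul_zero]
      linarith
    | succ n ih =>
      rw [Finset.sum_range_succ, mul_add, ih]
      have h := coeff_rec γ hγ0 (n+1)
      push_cast at h ⊢
      linarith
  have hN := key N
  have hc : fracCenteredCoeff γ ((N:ℤ)+1) ≤ 0 := by
    have := coeff_nonpos γ hγ0 hγ2 (N+1) (Nat.le_add_left 1 N)
    push_cast at this; exact this
  have hNpos : (0:ℝ) < (N:ℝ) + 1 + γ/2 := by positivity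
  have hterm : 0 ≤ ((N:ℝ) + 1 + γ/2) * (-(fracCenteredCoeff γ ((N:ℤ)+1))) := by
    apply mul_nonneg (le_of_lt hNpos); linarith
  have hγS : γ * ∑ k ∈ range N, (-(fracCenteredCoeff γ ((k:ℤ)+1)))
      ≤ γ * (fracCenteredCoeff γ 0 / 2) := by nlinarith
  exact le_of_mul_le_mul_left hγS hγ0

private lemma quad_decomp (s : Finset ℕ) (c : ℕ → ℕ → ℝ) (hc : ∀ i j, c i j = c j i) (x : ℕ → ℝ) :
    ∑ i ∈ s, ∑ j ∈ s, x i * (c i j * x j)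
      = ∑ i ∈ s, (x i)^2 * (∑ j ∈ s, c i j)
        - (1/2) * ∑ i ∈ s, ∑ j ∈ s, c i j * (x i - x j)^2 := by
  have h1 : ∑ i ∈ s, ∑ j ∈ s, c i j * (x j)^2 = ∑ i ∈ s, (x i)^2 * ∑ j ∈ s, c i j := by
    rw [Finset.sum_comm]
    refine Finset.sum_congr rfl fun j _ => ?_
    rw [Finset.mul_sum]
    refine Finset.sum_congr rfl fun i _ => ?_
    rw [hc]; ring
  have h2 : ∀ i ∈ s, ∑ j ∈ s, c i j * (x i - x j)^2
      = (x i)^2 * (∑ j ∈ s, c i j) + (∑ j ∈ s, c i j * (x j)^2)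
        - 2 * ∑ j ∈ s, x i * (c i j * x j) := by
    intro i _
    rw [Finset.mul_sum, Finset.mul_sum, ← Finset.sum_add_distrib,
      ← Finset.sum_sub_distrib]
    refine Finset.sum_congr rfl fun j _ => ?_
    ring
  rw [Finset.sum_congr rfl h2, Finset.sum_sub_distrib, Finset.sum_add_distrib, h1,
    ← Finset.mul_sum]
  ring

private lemma erase_sum_eq (b : ℕ → ℝ) (m i : ℕ) (hi : i < m) :
    ∑ j ∈ (range m).erase i, b (((i:ℤ) - (j:ℤ)).natAbs)
      = ∑ k ∈ range i, b (k+1) + ∑ k ∈ range (m - (i+1)), b (k+1) := by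
  have hsplit : (range m).erase i = range i ∪ Ico (i+1) m := by
    ext a
    simp only [Finset.mem_erase, Finset.mem_range, Finset.mem_union, Finset.mem_Ico]
    omega
  rw [hsplit, Finset.sum_union (by
    rw [Finset.disjoint_left]
    intro a ha hb
    simp only [Finset.mem_range] at ha
    simp only [Finset.mem_Ico] at hb
    omega)]
  congr 1
  · rw [← Finset.sum_range_reflect (fun k => b (k+1)) i]
    refine Finset.sum_congr rfl fun j hj => ?_
    simp only [Finset.mem_range] at hj
    congr 1
    omega
  · rw [Finset.sum_Ico_eq_sum_range]
    refine Finset.sum_congr rfl fun k _ => ?_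
    congr 1
    omega

theorem stmt_8 (γ : ℝ) (hγ0 : 0 < γ) (hγ2 : γ ≤ 2) (m : ℕ) (hm : 1 ≤ m)
    (B : Matrix (Fin m) (Fin m) ℝ)
    (hB : ∀ i j : Fin m, B i j = fracCenteredCoeff γ |(i : ℤ) - (j : ℤ)|) :
    B.PosDef := by
  have w0pos := coeff_zero_pos γ hγ0
  rw [Matrix.posDef_iff_dotProduct_mulVec]
  constructor
  · ext i j
    simp only [Matrix.conjTranspose_apply, hB, star_trivial]
    rw [abs_sub_comm]
  · intro x hx
    set W : ℕ → ℕ → ℝ := fun i j => fracCenteredCoeff γ ((((i:ℤ) - (j:ℤ)).natAbs : ℕ) : ℤ)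
      with hWdef
    set y : ℕ → ℝ := fun i => if h : i < m then x ⟨i, h⟩ else 0 with hydef
    have hWsymm : ∀ i j, W i j = W j i := by
      intro i j
      simp only [hWdef]
      congr 2
      omega
    -- diagonal value
    have hWdiag : ∀ i, W i i = fracCenteredCoeff γ 0 := by
      intro i; simp [hWdef]
    -- rewrite quadratic form
    have hQ : star x ⬝ᵥ B *ᵥ x = ∑ i ∈ range m, ∑ j ∈ range m, y i * (W i j * y j) := by
      have h1 : star x ⬝ᵥ B *ᵥ x = ∑ i : Fin m, x i * ∑ j : Fin m, B i j * x j := by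
        simp [dotProduct, Matrix.mulVec]
      rw [h1, ← Fin.sum_univ_eq_sum_range (fun i => ∑ j ∈ range m, y i * (W i j * y j)) m]
      refine Finset.sum_congr rfl fun i _ => ?_
      rw [← Fin.sum_univ_eq_sum_range (fun j => y i.val * (W i.val j * y j)) m,
        Finset.mul_sum]
      refine Finset.sum_congr rfl fun j _ => ?_
      have hyi : y i.val = x i := dif_pos i.isLt
      have hyj : y j.val = x j := dif_pos j.isLt
      rw [hB, hyi, hyj]
      congr 2
      simp only [hWdef]
      rw [Int.abs_eq_natAbs]
    rw [hQ, quad_decomp (range m) W hWsymm y]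
    -- facts about coefficients
    have hb : ∀ k : ℕ, 0 ≤ -(fracCenteredCoeff γ ((k:ℤ)+1)) := by
      intro k
      have := coeff_nonpos γ hγ0 hγ2 (k+1) (Nat.le_add_left 1 k)
      push_cast at this
      linarith
    have hS : ∀ N : ℕ, ∑ k ∈ range N, (-(fracCenteredCoeff γ ((k:ℤ)+1)))
        ≤ fracCenteredCoeff γ 0 / 2 := coeff_sum_bound γ hγ0 hγ2
    -- row sums
    have hrow : ∀ i, i < m → ∑ j ∈ (range m).erase i, W i j
        = -(∑ k ∈ range i, (-(fracCenteredCoeff γ ((k:ℤ)+1)))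
            + ∑ k ∈ range (m - (i+1)), (-(fracCenteredCoeff γ ((k:ℤ)+1)))) := by
      intro i hi
      have h1 := erase_sum_eq (fun k => fracCenteredCoeff γ (k:ℤ)) m i hi
      have h2 : ∑ j ∈ (range m).erase i, W i j
          = ∑ j ∈ (range m).erase i, fracCenteredCoeff γ ((((i:ℤ) - (j:ℤ)).natAbs : ℕ) : ℤ) :=
        rfl
      simp only [Finset.sum_neg_distrib]
      push_cast at h1 h2 ⊢
      rw [h2]
      linarith [h1]
    have hR : ∀ i ∈ range m, 0 ≤ ∑ j ∈ range m, W i j := by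
      intro i hi
      rw [Finset.mem_range] at hi
      rw [← Finset.add_sum_erase (range m) _ (Finset.mem_range.mpr hi), hWdiag, hrow i hi]
      have := hS i
      have := hS (m - (i+1))
      linarith
    have hR0 : fracCenteredCoeff γ 0 / 2 ≤ ∑ j ∈ range m, W 0 j := by
      rw [← Finset.add_sum_erase (range m) _ (Finset.mem_range.mpr hm), hWdiag, hrow 0 hm]
      have := hS (m - 1)
      simp only [Finset.range_zero, Finset.sum_empty]
      linarith
    -- T nonpositive
    have hTterm : ∀ i ∈ range m, ∀ j ∈ range m, W i j * (y i - y j)^2 ≤ 0 := by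
      intro i _ j _
      rcases eq_or_ne i j with rfl | hij
      · simp
      · have h1 : W i j ≤ 0 := by
          have hk : 1 ≤ ((i:ℤ) - (j:ℤ)).natAbs := by omega
          simpa [hWdef] using coeff_nonpos γ hγ0 hγ2 _ hk
        exact mul_nonpos_iff.mpr (Or.inr ⟨h1, sq_nonneg _⟩)
    have hTin : ∀ i ∈ range m, ∑ j ∈ range m, W i j * (y i - y j)^2 ≤ 0 := fun i hi =>
      Finset.sum_nonpos (fun j hj => hTterm i hi j hj)
    have hT : ∑ i ∈ range m, ∑ j ∈ range m, W i j * (y i - y j)^2 ≤ 0 :=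
      Finset.sum_nonpos hTin
    have hA : 0 ≤ ∑ i ∈ range m, (y i)^2 * (∑ j ∈ range m, W i j) :=
      Finset.sum_nonneg fun i hi => mul_nonneg (sq_nonneg _) (hR i hi)
    by_cases hy0 : y 0 ≠ 0
    · -- first entry nonzero : use the strict row-sum surplus at row 0
      have hApos : 0 < ∑ i ∈ range m, (y i)^2 * (∑ j ∈ range m, W i j) := by
        apply Finset.sum_pos' (fun i hi => mul_nonneg (sq_nonneg _) (hR i hi))
        refine ⟨0, Finset.mem_range.mpr hm, ?_⟩
        have hsq : 0 < (y 0)^2 := by positivity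
        have : 0 < ∑ j ∈ range m, W 0 j := lt_of_lt_of_le (by linarith) hR0
        exact mul_pos hsq this
      linarith
    · push_neg at hy0
      -- x is nonzero, so y is not identically 0 on range m; find adjacent unequal pair
      have hpair : ∃ i, i + 1 < m ∧ y i ≠ y (i+1) := by
        by_contra h
        push_neg at h
        have hall : ∀ i, i < m → y i = 0 := by
          intro i
          induction i with
          | zero => intro _; exact hy0
          | succ n ih =>
            intro hn
            have h1 : n + 1 < m := hn
            rw [← h n (by omega)]
            exact ih (by omega)
        apply hx
        funext i
        have := hall i.val i.isLt
        simpa [hydef, dif_pos i.isLt] using this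
      obtain ⟨i1, hi1, hne⟩ := hpair
      have hW1 : W i1 (i1+1) = fracCenteredCoeff γ 1 := by
        simp only [hWdef]
        norm_num
      have hinner : ∑ j ∈ range m, W i1 j * (y i1 - y j)^2 < 0 := by
        have h0 : (0:ℝ) = ∑ _j ∈ range m, (0:ℝ) := by simp
        rw [h0]
        apply Finset.sum_lt_sum (fun j hj => hTterm i1 (Finset.mem_range.mpr (by omega)) j hj)
        refine ⟨i1 + 1, Finset.mem_range.mpr hi1, ?_⟩
        have hsq : 0 < (y i1 - y (i1+1))^2 := by
          have := sub_ne_zero.mpr hne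
          positivity
        rw [hW1]
        exact mul_neg_of_neg_of_pos (coeff_one_neg γ hγ0) hsq
      have hTneg : ∑ i ∈ range m, ∑ j ∈ range m, W i j * (y i - y j)^2 < 0 := by
        have h0 : (0:ℝ) = ∑ _i ∈ range m, (0:ℝ) := by simp
        rw [h0]
        apply Finset.sum_lt_sum hTin
        exact ⟨i1, Finset.mem_range.mpr (by omega), hinner⟩
      linarith
end

section
/- For every real number γ with 0 < γ ≤ 2 there exists a constant C > 0 such that for all θ ∈ ℝ: | ((1 + γ/12) − (γ/12) cos θ) · |2 sin(θ/2)|^γ − |θ|^γ | ≤ C |θ|^{γ+4}. -/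
open Real


/-- sin x ≥ x - x³/6 for x ≥ 0 -/
lemma aux_sin_ge_cubic {x : ℝ} (hx : 0 ≤ x) : x - x ^ 3 / 6 ≤ Real.sin x := by
  have hd : ∀ y : ℝ, HasDerivAt (fun z => Real.sin z - (z - z ^ 3 / 6))
      (Real.cos y - (1 - 3 * y ^ 2 / 6)) y := by
    intro y
    have h2 : HasDerivAt (fun z : ℝ => z - z ^ 3 / 6) (1 - 3 * y ^ 2 / 6) y := by
      simpa using (hasDerivAt_id y).fun_sub ((hasDerivAt_pow 3 y).div_const 6)
    simpa using (Real.hasDerivAt_sin y).fun_sub h2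
  have mono : Monotone (fun z => Real.sin z - (z - z ^ 3 / 6)) := by
    apply monotone_of_deriv_nonneg (fun y => (hd y).differentiableAt)
    intro y
    rw [(hd y).deriv]
    nlinarith [Real.one_sub_sq_div_two_le_cos (x := y)]
  have := mono hx
  simp only [Real.sin_zero] at this
  norm_num at this
  linarith

/-- cos x ≤ 1 - x²/2 + x⁴/24 for all x -/
lemma aux_cos_le_quartic (x : ℝ) : Real.cos x ≤ 1 - x ^ 2 / 2 + x ^ 4 / 24 := by
  have key : ∀ y : ℝ, 0 ≤ y → Real.cos y ≤ 1 - y ^ 2 / 2 + y ^ 4 / 24 := by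
    intro y hy
    have hd : ∀ z : ℝ, HasDerivAt (fun w => 1 - w ^ 2 / 2 + w ^ 4 / 24 - Real.cos w)
        (-(2 * z) / 2 + 4 * z ^ 3 / 24 - -Real.sin z) z := by
      intro z
      have h1 : HasDerivAt (fun w : ℝ => 1 - w ^ 2 / 2 + w ^ 4 / 24)
          (-(2 * z) / 2 + 4 * z ^ 3 / 24) z := by
        have := (((hasDerivAt_pow 2 z).div_const 2).const_sub 1).fun_add ((hasDerivAt_pow 4 z).div_const 24)
        exact this.congr_deriv (by push_cast; ring)
      simpa using h1.fun_sub (Real.hasDerivAt_cos z)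
    have mono : MonotoneOn (fun w => 1 - w ^ 2 / 2 + w ^ 4 / 24 - Real.cos w) (Set.Ici 0) := by
      apply monotoneOn_of_deriv_nonneg (convex_Ici 0)
      · exact ((continuous_const.sub ((continuous_pow 2).div_const 2)).add
          ((continuous_pow 4).div_const 24)).sub Real.continuous_cos |>.continuousOn
      · exact fun z _ => (hd z).differentiableAt.differentiableWithinAt
      · intro z hz
        rw [interior_Ici] at hz
        rw [(hd z).deriv]
        nlinarith [aux_sin_ge_cubic hz.le, Real.sin_le hz.le]
    have := mono Set.self_mem_Ici hy hy
    simp only [Real.cos_zero] at this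
    norm_num at this
    linarith
  have h := key |x| (abs_nonneg x)
  rw [Real.cos_abs] at h
  calc Real.cos x ≤ 1 - |x| ^ 2 / 2 + |x| ^ 4 / 24 := h
    _ = 1 - x ^ 2 / 2 + x ^ 4 / 24 := by rw [sq_abs, ← abs_pow, abs_of_nonneg (by positivity : (0:ℝ) ≤ x ^ 4)]

/-- sin x ≤ x - x³/6 + x⁵/120 for x ≥ 0 -/
lemma aux_sin_le_quintic {x : ℝ} (hx : 0 ≤ x) : Real.sin x ≤ x - x ^ 3 / 6 + x ^ 5 / 120 := by
  have hd : ∀ y : ℝ, HasDerivAt (fun z => z - z ^ 3 / 6 + z ^ 5 / 120 - Real.sin z)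
      (1 - 3 * y ^ 2 / 6 + 5 * y ^ 4 / 120 - Real.cos y) y := by
    intro y
    have h1 : HasDerivAt (fun z : ℝ => z - z ^ 3 / 6 + z ^ 5 / 120)
        (1 - 3 * y ^ 2 / 6 + 5 * y ^ 4 / 120) y := by
      have := ((hasDerivAt_id y).fun_sub ((hasDerivAt_pow 3 y).div_const 6)).fun_add
        ((hasDerivAt_pow 5 y).div_const 120)
      exact this.congr_deriv (by push_cast; ring)
    simpa using h1.fun_sub (Real.hasDerivAt_sin y)
  have mono : Monotone (fun z => z - z ^ 3 / 6 + z ^ 5 / 120 - Real.sin z) := by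
    apply monotone_of_deriv_nonneg (fun y => (hd y).differentiableAt)
    intro y
    rw [(hd y).deriv]
    nlinarith [aux_cos_le_quartic y]
  have := mono hx
  simp only [Real.sin_zero] at this
  norm_num at this
  linarith

lemma aux_rpow_approx {γ u : ℝ} (hγ0 : 0 < γ) (hγ2 : γ ≤ 2) (hu0 : 0 ≤ u) (hu : u ≤ 1 / 2) :
    1 - γ * u - 2 * u ^ 2 ≤ (1 - u) ^ γ ∧ (1 - u) ^ γ ≤ 1 - γ * u + 2 * u ^ 2 := by
  have h1u : (0:ℝ) < 1 - u := by linarith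
  have hs : (-1:ℝ) ≤ -u := by linarith
  rcases le_or_gt 1 γ with hγ1 | hγ1
  · constructor
    · have := one_add_mul_self_le_rpow_one_add hs hγ1
      have h2 : (1 + -u) = 1 - u := by ring
      rw [h2] at this
      nlinarith [sq_nonneg u]
    · have hb : (1 - u) ^ (γ - 1) ≤ 1 + (γ - 1) * (-u) := by
        have := rpow_one_add_le_one_add_mul_self hs (by linarith : (0:ℝ) ≤ γ - 1) (by linarith)
        rwa [show (1 + -u) = 1 - u by ring] at this
      have hsplit : (1 - u) ^ γ = (1 - u) * (1 - u) ^ (γ - 1) := by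
        have h := (Real.rpow_add h1u 1 (γ - 1)).symm
        rw [Real.rpow_one] at h
        rw [show (1:ℝ) + (γ - 1) = γ by ring] at h
        exact h.symm
      have hbpos : (0:ℝ) ≤ (1 - u) ^ (γ - 1) := Real.rpow_nonneg h1u.le _
      have : (1 - u) ^ γ ≤ (1 - u) * (1 + (γ - 1) * (-u)) := by
        rw [hsplit]
        exact mul_le_mul_of_nonneg_left hb h1u.le
      nlinarith [sq_nonneg u]
  · constructor
    · have hb : (1 - u) ^ (1 - γ) ≤ 1 + (1 - γ) * (-u) := by
        have := rpow_one_add_le_one_add_mul_self hs (by linarith : (0:ℝ) ≤ 1 - γ) (by linarith)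
        rwa [show (1 + -u) = 1 - u by ring] at this
      have hbpos : (0:ℝ) < (1 - u) ^ (1 - γ) := Real.rpow_pos_of_pos h1u _
      have hden : (0:ℝ) < 1 + (1 - γ) * (-u) := by nlinarith
      have hsplit : (1 - u) ^ γ * (1 - u) ^ (1 - γ) = 1 - u := by
        rw [← Real.rpow_add h1u]
        norm_num
      have hge : (1 - γ * u - 2 * u ^ 2) * (1 + (1 - γ) * (-u)) ≤ 1 - u := by
        nlinarith [mul_nonneg (mul_nonneg (sq_nonneg u) (by linarith : (0:ℝ) ≤ 1/2 - u)) (by linarith : (0:ℝ) ≤ 1 - γ), mul_nonneg (sq_nonneg u) (sq_nonneg γ), sq_nonneg u]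
      nlinarith [Real.rpow_nonneg h1u.le γ, mul_le_mul_of_nonneg_left hb (Real.rpow_nonneg h1u.le γ)]
    · have := rpow_one_add_le_one_add_mul_self hs hγ0.le hγ1.le
      rw [show (1 + -u) = 1 - u by ring] at this
      nlinarith [sq_nonneg u]

set_option maxHeartbeats 2000000 in
lemma aux_key {γ y u P A : ℝ} (hγ0 : 0 < γ) (hγ2 : γ ≤ 2) (hy0 : 0 < y) (hy : y ≤ 1 / 2)
    (hu0 : 0 ≤ u) (hu_ub : u ≤ y ^ 2 / 6) (hu_lb : y ^ 2 / 6 - y ^ 4 / 120 ≤ u)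
    (hP_lb : 1 - γ * u - 2 * u ^ 2 ≤ P) (hP_ub : P ≤ 1 - γ * u + 2 * u ^ 2) (hP0 : 0 ≤ P)
    (hA_lb : 1 + γ * y ^ 2 / 6 - γ * y ^ 4 / 18 ≤ A) (hA_ub : A ≤ 1 + γ * y ^ 2 / 6) :
    |A * P - 1| ≤ 16 * y ^ 4 := by
  have hy2 : y ^ 2 ≤ 1 / 4 := by nlinarith
  have hy4 : y ^ 4 ≤ y ^ 2 / 4 := by nlinarith
  have hu14 : u ≤ 1 / 24 := by nlinarith
  have husq : u ^ 2 ≤ y ^ 4 / 36 := by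
    nlinarith [mul_le_mul hu_ub hu_ub hu0 (by positivity : (0:ℝ) ≤ y ^ 2 / 6)]
  have hAP_ub : A * P ≤ (1 + γ * y ^ 2 / 6) * (1 - γ * u + 2 * u ^ 2) :=
    mul_le_mul hA_ub hP_ub hP0 (by nlinarith [sq_nonneg y])
  have hPlb0 : 0 ≤ 1 - γ * u - 2 * u ^ 2 := by
    nlinarith [mul_le_mul_of_nonneg_right hγ2 hu0, mul_le_mul hu14 hu14 hu0 (by norm_num : (0:ℝ) ≤ 1/24)]
  have hAP_lb : (1 + γ * y ^ 2 / 6 - γ * y ^ 4 / 18) * (1 - γ * u - 2 * u ^ 2) ≤ A * P :=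
    mul_le_mul hA_lb hP_lb hPlb0 (by nlinarith [sq_nonneg y, pow_nonneg hy0.le 4])
  rw [abs_le]
  constructor
  · nlinarith [mul_nonneg (mul_nonneg hγ0.le (sq_nonneg y)) hu0,
      mul_nonneg (mul_nonneg hγ0.le hγ0.le) (mul_nonneg (sq_nonneg y) hu0),
      mul_nonneg (mul_nonneg hγ0.le (sq_nonneg y)) (sq_nonneg u),
      mul_le_mul_of_nonneg_left (sub_le_sub_left hu_lb (y ^ 2 / 6)) hγ0.le,
      mul_le_mul_of_nonneg_left hu_ub hγ0.le, sq_nonneg y, sq_nonneg u,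
      mul_nonneg (mul_nonneg hγ0.le (pow_nonneg hy0.le 4)) hu0,
      mul_nonneg (mul_nonneg hγ0.le (pow_nonneg hy0.le 4)) (sq_nonneg u)]
  · nlinarith [mul_nonneg (mul_nonneg hγ0.le (sq_nonneg y)) hu0,
      mul_nonneg (mul_nonneg hγ0.le hγ0.le) (mul_nonneg (sq_nonneg y) hu0),
      mul_nonneg (mul_nonneg hγ0.le (sq_nonneg y)) (sq_nonneg u),
      mul_le_mul_of_nonneg_left (sub_le_sub_left hu_lb (y ^ 2 / 6)) hγ0.le,
      mul_le_mul_of_nonneg_left hu_ub hγ0.le, sq_nonneg u]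


set_option maxHeartbeats 2000000 in
theorem stmt_12 (γ : ℝ) (hγ0 : 0 < γ) (hγ2 : γ ≤ 2) :
    ∃ C : ℝ, 0 < C ∧ ∀ θ : ℝ,
      |((1 + γ / 12) - γ / 12 * Real.cos θ) * |2 * Real.sin (θ / 2)| ^ γ - |θ| ^ γ|
        ≤ C * |θ| ^ (γ + 4) := by
  refine ⟨9, by norm_num, fun θ => ?_⟩
  rcases eq_or_ne θ 0 with rfl | hθ0
  · simp [Real.zero_rpow hγ0.ne', Real.zero_rpow (by positivity : γ + 4 ≠ 0)]
  have ht : 0 < |θ| := abs_pos.mpr hθ0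
  obtain ⟨A, hA_def⟩ : ∃ A : ℝ, A = (1 + γ / 12) - γ / 12 * Real.cos θ := ⟨_, rfl⟩
  rw [← hA_def]
  have hc1 : 1 - θ ^ 2 / 2 ≤ Real.cos θ := Real.one_sub_sq_div_two_le_cos
  have hc2 : Real.cos θ ≤ 1 - θ ^ 2 / 2 + θ ^ 4 / 24 := aux_cos_le_quartic θ
  have hA1 : 1 ≤ A := by
    have h1 := Real.cos_le_one θ
    have h12 : 0 ≤ γ / 12 := by positivity
    have := mul_nonneg h12 (by linarith : (0:ℝ) ≤ 1 - Real.cos θ)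
    rw [hA_def]
    nlinarith
  rcases le_or_gt |θ| 1 with hθ1 | hθ1
  · -- small case
    obtain ⟨y, hy_def⟩ : ∃ y : ℝ, y = |θ| / 2 := ⟨_, rfl⟩
    have hy0 : 0 < y := by rw [hy_def]; positivity
    have hy : y ≤ 1 / 2 := by rw [hy_def]; linarith
    have hy2 : y ^ 2 ≤ 1 / 4 := by nlinarith
    have hth2 : θ ^ 2 = 4 * y ^ 2 := by rw [hy_def, ← sq_abs θ]; ring
    have hth4 : θ ^ 4 = 16 * y ^ 4 := by nlinarith
    -- |sin(θ/2)| = sin y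
    have hpi : (1:ℝ) / 2 ≤ π := by nlinarith [Real.pi_gt_three]
    have habs_sin : |Real.sin (θ / 2)| = Real.sin y := by
      have hy_eq : y = |θ / 2| := by rw [hy_def, abs_div]; norm_num
      rcases le_or_gt 0 (θ / 2) with h | h
      · rw [abs_of_nonneg h] at hy_eq
        rw [← hy_eq, abs_of_nonneg (Real.sin_nonneg_of_nonneg_of_le_pi (hy_eq ▸ h) (by linarith))]
      · rw [abs_of_neg h] at hy_eq
        have h1 : θ / 2 = -y := by linarith
        rw [h1, Real.sin_neg, abs_neg,
          abs_of_nonneg (Real.sin_nonneg_of_nonneg_of_le_pi hy0.le (by linarith))]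
    have h2sin : |2 * Real.sin (θ / 2)| = 2 * Real.sin y := by
      rw [abs_mul, habs_sin]; norm_num
    have hsl : y - y ^ 3 / 6 ≤ Real.sin y := aux_sin_ge_cubic hy0.le
    have hsu : Real.sin y ≤ y - y ^ 3 / 6 + y ^ 5 / 120 := aux_sin_le_quintic hy0.le
    obtain ⟨u, hu_def⟩ : ∃ u : ℝ, u = 1 - Real.sin y / y := ⟨_, rfl⟩
    have hu_ub : u ≤ y ^ 2 / 6 := by
      rw [hu_def]
      have : 1 - y ^ 2 / 6 ≤ Real.sin y / y := by
        rw [le_div_iff₀ hy0]; nlinarith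
      linarith
    have hu_lb : y ^ 2 / 6 - y ^ 4 / 120 ≤ u := by
      rw [hu_def]
      have : Real.sin y / y ≤ 1 - y ^ 2 / 6 + y ^ 4 / 120 := by
        rw [div_le_iff₀ hy0]; nlinarith
      linarith
    have hy4 : y ^ 4 ≤ y ^ 2 / 4 := by nlinarith
    have hu0 : 0 ≤ u := by linarith [sq_nonneg y]
    have hu12 : u ≤ 1 / 2 := by linarith
    have husq : u ^ 2 ≤ y ^ 4 / 36 := by
      nlinarith [mul_le_mul hu_ub hu_ub hu0 (by positivity : (0:ℝ) ≤ y ^ 2 / 6)]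
    have hfact : |2 * Real.sin (θ / 2)| = (1 - u) * |θ| := by
      rw [h2sin, hu_def]
      have hth : |θ| = 2 * y := by rw [hy_def]; ring
      rw [hth]
      field_simp
      ring
    obtain ⟨P, hP_def⟩ : ∃ P : ℝ, P = (1 - u) ^ γ := ⟨_, rfl⟩
    have hP0 : 0 ≤ P := hP_def ▸ Real.rpow_nonneg (by linarith) γ
    obtain ⟨hP_lb, hP_ub⟩ := aux_rpow_approx hγ0 hγ2 hu0 hu12
    rw [← hP_def] at hP_lb hP_ub
    have hsplit : |2 * Real.sin (θ / 2)| ^ γ = P * |θ| ^ γ := by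
      rw [hfact, Real.mul_rpow (by linarith) (abs_nonneg θ), hP_def]
    have hrhs : |θ| ^ (γ + 4) = |θ| ^ γ * θ ^ 4 := by
      rw [Real.rpow_add ht]
      congr 1
      rw [show (4:ℝ) = ((4:ℕ):ℝ) by norm_num, Real.rpow_natCast, ← abs_pow,
        abs_of_nonneg (by positivity : (0:ℝ) ≤ θ ^ 4)]
    have hT0 : 0 < |θ| ^ γ := Real.rpow_pos_of_pos ht γ
    rw [hsplit, hrhs]
    have hA_ub : A ≤ 1 + γ * y ^ 2 / 6 := by
      have := mul_le_mul_of_nonneg_left hc1 (by positivity : (0:ℝ) ≤ γ / 12)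
      rw [hA_def]
      nlinarith
    have hA_lb : 1 + γ * y ^ 2 / 6 - γ * y ^ 4 / 18 ≤ A := by
      have := mul_le_mul_of_nonneg_left hc2 (by positivity : (0:ℝ) ≤ γ / 12)
      rw [hA_def]
      nlinarith
    have hkey : |A * P - 1| ≤ θ ^ 4 := by
      rw [hth4]
      exact aux_key hγ0 hγ2 hy0 hy hu0 hu_ub hu_lb hP_lb hP_ub hP0 hA_lb hA_ub
    have heq : A * (P * |θ| ^ γ) - |θ| ^ γ = (A * P - 1) * |θ| ^ γ := by ring
    rw [heq, abs_mul, abs_of_nonneg hT0.le]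
    have h1 : |A * P - 1| * |θ| ^ γ ≤ θ ^ 4 * |θ| ^ γ :=
      mul_le_mul_of_nonneg_right hkey hT0.le
    nlinarith [mul_nonneg (by positivity : (0:ℝ) ≤ θ ^ 4) hT0.le]
  · -- large case
    have hX0 : (0:ℝ) ≤ |2 * Real.sin (θ / 2)| ^ γ := Real.rpow_nonneg (abs_nonneg _) γ
    have h2s : |2 * Real.sin (θ / 2)| ≤ 2 := by
      rw [abs_mul]
      have h := Real.abs_sin_le_one (θ / 2)
      rw [show |(2:ℝ)| = 2 by norm_num]
      linarith
    have hX : |2 * Real.sin (θ / 2)| ^ γ ≤ 4 := by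
      calc |2 * Real.sin (θ / 2)| ^ γ ≤ (2:ℝ) ^ γ :=
            Real.rpow_le_rpow (abs_nonneg _) h2s hγ0.le
        _ ≤ (2:ℝ) ^ (2:ℝ) := Real.rpow_le_rpow_of_exponent_le one_le_two hγ2
        _ = 4 := by
            rw [show (2:ℝ) = ((2:ℕ):ℝ) by norm_num, Real.rpow_natCast]; norm_num
    have hA2 : A ≤ 4 / 3 := by
      have := Real.neg_one_le_cos θ
      nlinarith
    have hT : |θ| ^ γ ≤ |θ| ^ (γ + 4) :=
      Real.rpow_le_rpow_of_exponent_le hθ1.le (by linarith)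
    have hT1 : 1 ≤ |θ| ^ (γ + 4) := by
      have := Real.rpow_le_rpow_of_exponent_le hθ1.le (by linarith : (0:ℝ) ≤ γ + 4)
      rwa [Real.rpow_zero] at this
    have habs : |A * |2 * Real.sin (θ / 2)| ^ γ - |θ| ^ γ| ≤
        A * |2 * Real.sin (θ / 2)| ^ γ + |θ| ^ γ := by
      rw [abs_le]
      have h0 : 0 ≤ A * |2 * Real.sin (θ / 2)| ^ γ := mul_nonneg (by linarith) hX0
      have hT0 : 0 < |θ| ^ γ := Real.rpow_pos_of_pos ht γ
      constructor <;> linarith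
    have hAX : A * |2 * Real.sin (θ / 2)| ^ γ ≤ 16 / 3 := by nlinarith
    calc |A * |2 * Real.sin (θ / 2)| ^ γ - |θ| ^ γ| ≤ 16 / 3 + |θ| ^ γ := by linarith
      _ ≤ 9 * |θ| ^ (γ + 4) := by linarith
end
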